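/- (Filipów–Mrożek–Recław–Szuca) Let I be an ideal on ℕ containing all finite sets. The following are equivalent: (i) the restriction I↾A is FinBW for every A ∉ I; (ii) I is wp⁺, i.e., for every scheme {A_s : s ∈ 2^{<ω}} with A_∅ ∈ I⁺ there are B ∈ I⁺ and α ∈ 2^ℕ such that B ⊆* A_{α↾n} for all n. -/

import Mathlib

open Set Filter Topology

def IsIdeal {X : Type*} (I : Set (Set X)) : Prop :=
  ∅ ∈ I ∧ (Set.univ : Set X) ∉ I ∧ (∀ A B : Set X, A ∈ I → B ∈ I → A ∪ B ∈ I) ∧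
    ∀ A B : Set X, A ⊆ B → B ∈ I → A ∈ I

def ContainsFin {X : Type*} (I : Set (Set X)) : Prop := ∀ A : Set X, A.Finite → A ∈ I

/-- `I` (an ideal on a countable set `X`) is FinBW: every bounded real sequence
indexed by `X` has a convergent subsequence indexed by an `I`-positive set
(convergence along the cofinite filter of the index set). -/
def FinBW {X : Type*} (I : Set (Set X)) : Prop :=
  ∀ x : X → ℝ, (∃ M : ℝ, ∀ n, |x n| ≤ M) →
    ∃ A : Set X, A ∉ I ∧ ∃ l : ℝ, Tendsto (fun n : ↥A => x ↑n) cofinite (nhds l)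

/-- Restriction `I↾A` as an ideal on `↥A`. -/
def restrictIdeal {X : Type*} (I : Set (Set X)) (A : Set X) : Set (Set ↥A) :=
  {B : Set ↥A | ((↑) '' B : Set X) ∈ I}

/-- A scheme: a family indexed by finite binary sequences with
`A_s = A_{s⌢0} ∪ A_{s⌢1}` disjointly. -/
def IsScheme (A : List Bool → Set ℕ) : Prop :=
  ∀ s : List Bool,
    A s = A (s ++ [false]) ∪ A (s ++ [true]) ∧ A (s ++ [false]) ∩ A (s ++ [true]) = ∅

/-- `I` is wp⁺. -/
def WPplus (I : Set (Set ℕ)) : Prop :=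
  ∀ A : List Bool → Set ℕ, IsScheme A → A [] ∉ I →
    ∃ B : Set ℕ, B ∉ I ∧ ∃ α : ℕ → Bool,
      ∀ n : ℕ, (B \ A (List.ofFn fun i : Fin n => α ↑i)).Finite

/-! ### Auxiliary machinery -/

section Aux

set_option maxHeartbeats 1000000

/-! #### The ternary Cantor value of a branch -/

noncomputable def bval (b : Bool) : ℝ := if b then 2 else 0

lemma bval_nonneg (b : Bool) : 0 ≤ bval b := by cases b <;> norm_num [bval]
lemma bval_le (b : Bool) : bval b ≤ 2 := by cases b <;> norm_num [bval]
lemma bval_true : bval true = 2 := rfl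
lemma bval_false : bval false = 0 := by norm_num [bval]

noncomputable def valf (f : ℕ → Bool) : ℝ := ∑' k, bval (f k) * (1/3:ℝ)^(k+1)

lemma third_pow_anti {m n : ℕ} (h : m ≤ n) : (1/3:ℝ)^n ≤ (1/3:ℝ)^m :=
  pow_le_pow_of_le_one (by norm_num) (by norm_num) h

lemma summable_valf (f : ℕ → Bool) : Summable (fun k => bval (f k) * (1/3:ℝ)^(k+1)) := by
  refine Summable.of_nonneg_of_le
    (fun k => mul_nonneg (bval_nonneg _) (by positivity))
    (fun k => ?_)
    ((summable_geometric_of_lt_one (by norm_num : (0:ℝ) ≤ 1/3) (by norm_num)).mul_left 2)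
  have h1 : (1/3:ℝ)^(k+1) ≤ (1/3:ℝ)^k := third_pow_anti (Nat.le_succ k)
  have h2 : (0:ℝ) ≤ (1/3:ℝ)^(k+1) := by positivity
  nlinarith [bval_le (f k), bval_nonneg (f k)]

noncomputable def tailf (f : ℕ → Bool) (j : ℕ) : ℝ := ∑' k, bval (f (k + j)) * (1/3:ℝ)^(k + j + 1)

lemma tailf_nonneg (f : ℕ → Bool) (j : ℕ) : 0 ≤ tailf f j :=
  tsum_nonneg (fun k => mul_nonneg (bval_nonneg _) (by positivity))

lemma tailf_le (f : ℕ → Bool) (j : ℕ) : tailf f j ≤ (1/3:ℝ)^j := by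
  have hs : Summable (fun k => bval (f (k + j)) * (1/3:ℝ)^(k + j + 1)) :=
    (summable_nat_add_iff (f := fun k => bval (f k) * (1/3:ℝ)^(k+1)) j).mpr (summable_valf f)
  have hg0 : Summable (fun k : ℕ => (2 * (1/3:ℝ)^(j+1)) * (1/3:ℝ)^k) :=
    (summable_geometric_of_lt_one (by norm_num : (0:ℝ) ≤ 1/3) (by norm_num)).mul_left _
  have hg : Summable (fun k : ℕ => 2 * (1/3:ℝ)^(k + j + 1)) := by
    refine hg0.congr fun k => ?_
    ring
  have h1 : tailf f j ≤ ∑' k, 2 * (1/3:ℝ)^(k + j + 1) := by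
    refine Summable.tsum_le_tsum (fun k => ?_) hs hg
    have h2 : (0:ℝ) ≤ (1/3:ℝ)^(k+j+1) := by positivity
    nlinarith [bval_le (f (k + j))]
  have h2 : ∑' k : ℕ, 2 * (1/3:ℝ)^(k + j + 1) = (1/3:ℝ)^j := by
    rw [tsum_congr (fun k : ℕ => by ring :
        ∀ k : ℕ, 2 * (1/3:ℝ)^(k + j + 1) = (2 * (1/3:ℝ)^(j+1)) * (1/3:ℝ)^k),
      tsum_mul_left, tsum_geometric_of_lt_one (by norm_num) (by norm_num), pow_succ]
    norm_num
    ring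
  linarith

lemma valf_split (f : ℕ → Bool) (j : ℕ) :
    valf f = (∑ i ∈ Finset.range j, bval (f i) * (1/3:ℝ)^(i+1)) + tailf f j :=
  (Summable.sum_add_tsum_nat_add j (summable_valf f)).symm

lemma valf_nonneg (f : ℕ → Bool) : 0 ≤ valf f :=
  tsum_nonneg (fun k => mul_nonneg (bval_nonneg _) (by positivity))

lemma valf_le_one (f : ℕ → Bool) : valf f ≤ 1 := by
  have := valf_split f 0
  simp only [Finset.range_zero, Finset.sum_empty, zero_add] at this
  have h := tailf_le f 0
  simp only [pow_zero] at h
  linarith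

lemma valf_sep {f g : ℕ → Bool} {j : ℕ} (h : ∀ i < j, f i = g i) (hj : f j ≠ g j) :
    (1/3:ℝ)^(j+1) ≤ |valf f - valf g| := by
  have key : ∀ f g : ℕ → Bool, (∀ i < j, f i = g i) → f j = true → g j = false →
      (1/3:ℝ)^(j+1) ≤ valf f - valf g := by
    intro f g h hf hg
    have hsum : (∑ i ∈ Finset.range j, bval (f i) * (1/3:ℝ)^(i+1))
        = ∑ i ∈ Finset.range j, bval (g i) * (1/3:ℝ)^(i+1) :=
      Finset.sum_congr rfl (fun i hi => by rw [h i (Finset.mem_range.mp hi)])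
    have hf1 := valf_split f (j+1)
    have hg1 := valf_split g (j+1)
    rw [Finset.sum_range_succ, hf, bval_true] at hf1
    rw [Finset.sum_range_succ, hg, bval_false] at hg1
    have h1 := tailf_nonneg f (j+1)
    have h2 := tailf_le f (j+1)
    have h3 := tailf_nonneg g (j+1)
    have h4 := tailf_le g (j+1)
    linarith
  cases hfj : f j <;> cases hgj : g j
  · exact absurd (hfj.trans hgj.symm) hj
  · have := key g f (fun i hi => (h i hi).symm) hgj hfj
    rw [abs_sub_comm]
    exact this.trans (le_abs_self _)
  · exact (key f g h hfj hgj).trans (le_abs_self _)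
  · exact absurd (hfj.trans hgj.symm) hj

/-! #### Binary digits of a real in `[0,1)` -/

noncomputable def dig (y : ℝ) (i : ℕ) : Bool := decide (⌊y * 2^(i+1)⌋ % 2 = 1)

lemma floor_eq_of_dig {y y' : ℝ} (hy : y ∈ Set.Ico (0:ℝ) 1) (hy' : y' ∈ Set.Ico (0:ℝ) 1)
    {n : ℕ} (h : ∀ i < n, dig y i = dig y' i) : ⌊y * 2^n⌋ = ⌊y' * 2^n⌋ := by
  induction n with
  | zero =>
    simp only [pow_zero, mul_one]
    rw [Int.floor_eq_zero_iff.mpr (by simpa using hy),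
      Int.floor_eq_zero_iff.mpr (by simpa using hy')]
  | succ n ih =>
    have ha : ⌊y * 2^n⌋ = ⌊y' * 2^n⌋ := ih (fun i hi => h i (hi.trans (Nat.lt_succ_self n)))
    set a := ⌊y * 2^n⌋ with hadef
    have key : ∀ z : ℝ, z ∈ Set.Ico (0:ℝ) 1 → ∀ b : ℤ, ⌊z * 2^n⌋ = b →
        ⌊z * 2^(n+1)⌋ = 2*b ∨ ⌊z * 2^(n+1)⌋ = 2*b + 1 := by
      intro z hz b hb
      have h1 : (b : ℝ) ≤ z * 2^n := by rw [← hb]; exact Int.floor_le _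
      have h2 : z * 2^n < b + 1 := by rw [← hb]; exact Int.lt_floor_add_one _
      have h3 : (2*b : ℝ) ≤ z * 2^(n+1) := by rw [pow_succ]; nlinarith
      have h4 : z * 2^(n+1) < 2*b + 2 := by rw [pow_succ]; nlinarith
      have h5 : (2*b : ℤ) ≤ ⌊z * 2^(n+1)⌋ := by
        exact_mod_cast Int.le_floor.mpr (by exact_mod_cast h3)
      have h6 : ⌊z * 2^(n+1)⌋ < 2*b + 2 := by
        have := Int.floor_le (z * 2^(n+1))
        have : (⌊z * 2^(n+1)⌋ : ℝ) < 2*b + 2 := lt_of_le_of_lt this h4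
        exact_mod_cast this
      omega
    have hb := key y hy a rfl
    have hb' := key y' hy' a ha.symm
    have hd := h n (Nat.lt_succ_self n)
    simp only [dig, decide_eq_decide] at hd
    omega

lemma dist_lt_of_dig {y y' : ℝ} (hy : y ∈ Set.Ico (0:ℝ) 1) (hy' : y' ∈ Set.Ico (0:ℝ) 1)
    {n : ℕ} (h : ∀ i < n, dig y i = dig y' i) : |y - y'| < (1/2:ℝ)^n := by
  have hf := floor_eq_of_dig hy hy' h
  have h1 : (⌊y * 2^n⌋ : ℝ) ≤ y * 2^n := Int.floor_le _
  have h2 : y * 2^n < ⌊y * 2^n⌋ + 1 := Int.lt_floor_add_one _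
  have h3 : (⌊y' * 2^n⌋ : ℝ) ≤ y' * 2^n := Int.floor_le _
  have h4 : y' * 2^n < ⌊y' * 2^n⌋ + 1 := Int.lt_floor_add_one _
  rw [hf] at h1 h2
  have h5 : |y * 2^n - y' * 2^n| < 1 := by rw [abs_sub_lt_iff]; constructor <;> linarith
  have h6 : (0:ℝ) < 2^n := by positivity
  have h7 : |y - y'| * 2^n < 1 := by
    calc |y - y'| * 2^n = |y - y'| * |2^n| := by rw [abs_of_pos h6]
    _ = |(y - y') * 2^n| := (abs_mul _ _).symm
    _ = |y * 2^n - y' * 2^n| := by ring_nf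
    _ < 1 := h5
  rw [div_pow, one_pow]
  exact (lt_div_iff₀ h6).mpr h7

/-! #### Agreement of a branch with a finite sequence -/

def Agree (f : ℕ → Bool) (s : List Bool) : Prop := ∀ i < s.length, f i = s.getD i false

lemma agree_nil (f : ℕ → Bool) : Agree f [] := by intro i hi; simp at hi

lemma agree_append {f : ℕ → Bool} {s : List Bool} {b : Bool} :
    Agree f (s ++ [b]) ↔ Agree f s ∧ f s.length = b := by
  constructor
  · intro h
    refine ⟨fun i hi => ?_, ?_⟩
    · have := h i (by simp; omega)
      rwa [List.getD_append _ _ _ _ hi] at this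
    · have := h s.length (by simp)
      rwa [List.getD_append_right _ _ _ _ le_rfl, Nat.sub_self] at this
  · rintro ⟨h1, h2⟩ i hi
    simp only [List.length_append, List.length_singleton] at hi
    rcases lt_or_eq_of_le (Nat.lt_succ_iff.mp hi) with hlt | heq
    · rw [List.getD_append _ _ _ _ hlt]; exact h1 i hlt
    · subst heq; rw [List.getD_append_right _ _ _ _ le_rfl, Nat.sub_self]; exact h2

lemma agree_ofFn {f : ℕ → Bool} {n : ℕ} {α : ℕ → Bool} :
    Agree f (List.ofFn fun i : Fin n => α i) ↔ ∀ i < n, f i = α i := by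
  constructor
  · intro h i hi
    have := h i (by simpa using hi)
    rw [List.getD_eq_getElem?_getD, List.getElem?_ofFn] at this
    simpa [List.ofFnNthVal, hi] using this
  · intro h i hi
    rw [List.length_ofFn] at hi
    rw [List.getD_eq_getElem?_getD, List.getElem?_ofFn]
    simpa [List.ofFnNthVal, hi] using h i hi

/-! #### The canonical branch of a point through a scheme -/

open Classical in
noncomputable def pref (T : List Bool → Set ℕ) (n : ℕ) : ℕ → List Bool
  | 0 => []
  | k+1 => pref T n k ++ [if n ∈ T (pref T n k ++ [true]) then true else false]

open Classical in
noncomputable def dg (T : List Bool → Set ℕ) (n k : ℕ) : Bool :=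
  if n ∈ T (pref T n k ++ [true]) then true else false

lemma pref_succ (T : List Bool → Set ℕ) (n k : ℕ) :
    pref T n (k+1) = pref T n k ++ [dg T n k] := rfl

lemma pref_eq_ofFn (T : List Bool → Set ℕ) (n k : ℕ) :
    pref T n k = List.ofFn (fun i : Fin k => dg T n i) := by
  induction k with
  | zero => rfl
  | succ k ih =>
    rw [pref_succ, ih, List.ofFn_succ']
    simp [List.concat_eq_append, Fin.last]

lemma pref_mem {T : List Bool → Set ℕ} (hT : IsScheme T) {n : ℕ} (hn : n ∈ T []) :
    ∀ k, n ∈ T (pref T n k)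
  | 0 => hn
  | k+1 => by
    have ih := pref_mem hT hn k
    rw [(hT (pref T n k)).1] at ih
    rw [pref_succ]
    by_cases h : n ∈ T (pref T n k ++ [true])
    · have hd : dg T n k = true := if_pos h
      rw [hd]; exact h
    · have hd : dg T n k = false := if_neg h
      rw [hd]
      rcases ih with h1 | h2
      · exact h1
      · exact absurd h2 h

end Aux

/-! ### Main theorem -/

set_option maxHeartbeats 1000000 in
/-- Filipów–Mrożek–Recław–Szuca: `I↾A` is FinBW for every `I`-positive `A`
iff `I` is wp⁺. -/
theorem hereditarily_finbw_iff_wpplus (I : Set (Set ℕ)) (hI : IsIdeal I)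
    (hfin : ContainsFin I) :
    (∀ A : Set ℕ, A ∉ I → FinBW (restrictIdeal I A)) ↔ WPplus I := by
  constructor
  · -- hereditary FinBW → wp⁺
    intro hBW T hT hT0
    set x : ↥(T []) → ℝ := fun m => valf (fun k => dg T ↑m k) with hxdef
    obtain ⟨A', hA', l, hl⟩ := hBW (T []) hT0 x
      ⟨1, fun m => abs_le.mpr ⟨by linarith [valf_nonneg (fun k => dg T ↑m k)],
        valf_le_one _⟩⟩
    have hB : (Subtype.val '' A' : Set ℕ) ∉ I := hA'
    refine ⟨Subtype.val '' A', hB, ?_⟩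
    have hBinf : (Subtype.val '' A' : Set ℕ).Infinite := by
      intro hfin'
      exact hB (hfin _ hfin')
    have hA'inf : A'.Infinite := fun h => hBinf (h.image _)
    haveI : Infinite ↥A' := hA'inf.to_subtype
    set S : ℕ → Set ↥A' := fun k => {m | dist (x ↑m) l < (1/3:ℝ)^(k+1)/2} with hSdef
    have hSc : ∀ k, ((S k)ᶜ : Set ↥A').Finite := by
      intro k
      have hev := Metric.tendsto_nhds.mp hl ((1/3:ℝ)^(k+1)/2) (by positivity)
      have := Filter.eventually_cofinite.mp hev
      simpa [hSdef, Set.compl_setOf] using this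
    have hSsub : ∀ {k k' : ℕ}, k ≤ k' → S k' ⊆ S k := by
      intro k k' hk m hm
      have : (1/3:ℝ)^(k'+1) ≤ (1/3:ℝ)^(k+1) := third_pow_anti (by omega)
      simp only [hSdef, mem_setOf_eq] at hm ⊢
      linarith
    have hSne : ∀ k, (S k).Nonempty := by
      intro k
      have := (hSc k).infinite_compl
      rw [compl_compl] at this
      exact this.nonempty
    choose c hc using hSne
    have hagree : ∀ k (m m' : ↥A'), m ∈ S k → m' ∈ S k →
        ∀ i ≤ k, dg T (↑↑m : ℕ) i = dg T (↑↑m' : ℕ) i := by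
      intro k m m' hm hm'
      intro i
      induction i using Nat.strong_induction_on with
      | _ i IH =>
        intro hik
        by_contra hne
        have hsep := valf_sep (f := fun j => dg T (↑↑m : ℕ) j) (g := fun j => dg T (↑↑m' : ℕ) j)
          (fun j hj => IH j hj (le_of_lt (lt_of_lt_of_le hj hik))) hne
        have hd : dist (x ↑m) (x ↑m') < (1/3:ℝ)^(k+1) := by
          calc dist (x ↑m) (x ↑m') ≤ dist (x ↑m) l + dist (x ↑m') l := dist_triangle_right _ _ _
          _ < (1/3:ℝ)^(k+1)/2 + (1/3:ℝ)^(k+1)/2 := add_lt_add hm hm'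
          _ = (1/3:ℝ)^(k+1) := by ring
        have heq : dist (x ↑m) (x ↑m')
            = |valf (fun j => dg T (↑↑m : ℕ) j) - valf (fun j => dg T (↑↑m' : ℕ) j)| := by
          rw [hxdef, Real.dist_eq]
        have hmono : (1/3:ℝ)^(k+1) ≤ (1/3:ℝ)^(i+1) := third_pow_anti (by omega)
        rw [heq] at hd
        linarith
    refine ⟨fun k => dg T (↑↑(c k) : ℕ) k, fun n => ?_⟩
    apply Set.Finite.subset ((hSc n).image (fun m : ↥A' => (↑↑m : ℕ)))
    rintro b ⟨hbB, hbT⟩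
    obtain ⟨m₀, hm₀A, rfl⟩ := hbB
    refine ⟨⟨m₀, hm₀A⟩, ?_, rfl⟩
    intro hmS
    apply hbT
    have hpl : ∀ i < n, dg T (↑m₀ : ℕ) i = dg T (↑↑(c i) : ℕ) i := by
      intro i hi
      exact hagree i ⟨m₀, hm₀A⟩ (c i) (hSsub (le_of_lt hi) hmS) (hc i) i le_rfl
    have hlist : (List.ofFn fun i : Fin n => dg T (↑↑(c ↑i) : ℕ) ↑i) = pref T (↑m₀ : ℕ) n := by
      rw [pref_eq_ofFn]
      exact congrArg _ (funext fun i => (hpl i i.isLt).symm)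
    rw [hlist]
    exact pref_mem hT m₀.2 n
  · -- wp⁺ → hereditary FinBW
    intro hWP A hA x hbd
    obtain ⟨M, hM⟩ := hbd
    set M' : ℝ := |M| + 1 with hM'def
    set cst : ℝ := 2*M' + 1 with hcstdef
    have hM'1 : 1 ≤ M' := by rw [hM'def]; linarith [abs_nonneg M]
    have hcst : (0:ℝ) < cst := by rw [hcstdef]; linarith
    set y : ↥A → ℝ := fun m => (x m + M') / cst with hydef
    have hy : ∀ m : ↥A, y m ∈ Set.Ico (0:ℝ) 1 := by
      intro m
      have h1 : |x m| ≤ M := hM m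
      have h2 : M ≤ |M| := le_abs_self M
      have h3 : -(M' - 1) ≤ x m := by
        have := abs_le.mp h1
        rw [hM'def]; linarith [this.1]
      have h4 : x m ≤ M' - 1 := by
        have := abs_le.mp h1
        rw [hM'def]; linarith [this.2]
      constructor
      · apply div_nonneg _ hcst.le
        linarith
      · rw [div_lt_one hcst]
        linarith
    set Sch : List Bool → Set ℕ :=
      fun s => Subtype.val '' {m : ↥A | Agree (fun i => dig (y m) i) s} with hSchdef
    have hSch : IsScheme Sch := by
      intro s
      constructor
      · show Sch s = Sch (s ++ [false]) ∪ Sch (s ++ [true])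
        rw [hSchdef]
        simp only []
        rw [← Set.image_union]
        refine congrArg (Set.image Subtype.val) ?_
        ext m
        simp only [Set.mem_setOf_eq, Set.mem_union]
        constructor
        · intro hm
          cases hb : dig (y m) s.length
          · exact Or.inl (agree_append.mpr ⟨hm, hb⟩)
          · exact Or.inr (agree_append.mpr ⟨hm, hb⟩)
        · rintro (hm | hm) <;> exact (agree_append.mp hm).1
      · show Sch (s ++ [false]) ∩ Sch (s ++ [true]) = ∅
        rw [hSchdef]
        simp only []
        rw [← Set.image_inter Subtype.val_injective]
        convert Set.image_empty Subtype.val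
        ext m
        simp only [Set.mem_inter_iff, Set.mem_setOf_eq, Set.mem_empty_iff_false, iff_false]
        rintro ⟨h1, h2⟩
        have e1 := (agree_append.mp h1).2
        have e2 := (agree_append.mp h2).2
        rw [e1] at e2
        exact Bool.noConfusion e2
    have hSchNil : Sch [] = A := by
      show Subtype.val '' {m : ↥A | Agree (fun i => dig (y m) i) []} = A
      have : {m : ↥A | Agree (fun i => dig (y m) i) []} = Set.univ := by
        ext m; simp [agree_nil]
      rw [this, Set.image_univ, Subtype.range_coe]
    obtain ⟨B, hB, α, hα⟩ := hWP Sch hSch (by rwa [hSchNil])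
    set A' : Set ↥A := {m : ↥A | (↑m : ℕ) ∈ B} with hA'def
    have him : Subtype.val '' A' = A ∩ B := by
      ext n
      simp only [hA'def, Set.mem_image, Set.mem_setOf_eq, Set.mem_inter_iff]
      constructor
      · rintro ⟨m, hm, rfl⟩; exact ⟨m.2, hm⟩
      · rintro ⟨hnA, hnB⟩; exact ⟨⟨n, hnA⟩, hnB, rfl⟩
    have hBA : (B \ A).Finite := by
      have h0 := hα 0
      have : (List.ofFn fun i : Fin 0 => α ↑i) = ([] : List Bool) := by simp
      rw [this, hSchNil] at h0
      exact h0
    have hpos : A ∩ B ∉ I := by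
      intro hmem
      apply hB
      refine hI.2.2.2 B ((A ∩ B) ∪ (B \ A)) ?_ (hI.2.2.1 _ _ hmem (hfin _ hBA))
      intro n hn
      by_cases hnA : n ∈ A
      · exact Or.inl ⟨hnA, hn⟩
      · exact Or.inr ⟨hn, hnA⟩
    have hA'inf : A'.Infinite := by
      intro hfin'
      apply hpos
      rw [← him]
      exact hfin (Subtype.val '' A') (hfin'.image _)
    haveI : Infinite ↥A' := hA'inf.to_subtype
    set g : ↥A' → ℝ := fun m => x ↑m with hgdef
    have hC : Cauchy (Filter.map g cofinite) := by
      rw [Metric.cauchy_iff]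
      refine ⟨Filter.map_neBot, fun ε hε => ?_⟩
      obtain ⟨n, hn⟩ : ∃ n : ℕ, (1/2:ℝ)^n < ε / cst := by
        refine exists_pow_lt_of_lt_one (by positivity) (by norm_num)
      set s₀ : Set ↥A' := {m : ↥A' | (↑↑m : ℕ) ∈ Sch (List.ofFn fun i : Fin n => α ↑i)}
        with hs₀def
      have hs₀c : (s₀ᶜ : Set ↥A').Finite := by
        have heq : (s₀ᶜ : Set ↥A')
            = (fun m : ↥A' => (↑↑m : ℕ)) ⁻¹' (B \ Sch (List.ofFn fun i : Fin n => α ↑i)) := by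
          ext m
          simp only [hs₀def, Set.mem_compl_iff, Set.mem_setOf_eq, Set.mem_preimage,
            Set.mem_diff]
          have : (↑↑m : ℕ) ∈ B := m.2
          tauto
        rw [heq]
        exact Set.Finite.preimage
          ((Subtype.val_injective.comp Subtype.val_injective).injOn) (hα n)
      refine ⟨g '' s₀, Filter.image_mem_map hs₀c, ?_⟩
      rintro _ ⟨m₁, hm₁, rfl⟩ _ ⟨m₂, hm₂, rfl⟩
      rw [hs₀def, Set.mem_setOf_eq, hSchdef] at hm₁ hm₂
      obtain ⟨w₁, hw₁, he₁⟩ := hm₁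
      obtain ⟨w₂, hw₂, he₂⟩ := hm₂
      have hw₁' : w₁ = (↑m₁ : ↥A) := Subtype.val_injective he₁
      have hw₂' : w₂ = (↑m₂ : ↥A) := Subtype.val_injective he₂
      subst hw₁' hw₂'
      rw [Set.mem_setOf_eq] at hw₁ hw₂
      have hag : ∀ i < n, dig (y ↑m₁) i = dig (y ↑m₂) i := by
        intro i hi
        have h1 := agree_ofFn.mp hw₁ i hi
        have h2 := agree_ofFn.mp hw₂ i hi
        rw [h1, h2]
      have hylt := dist_lt_of_dig (hy _) (hy _) hag
      have hxy : ∀ m : ↥A, x m = y m * cst - M' := by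
        intro m
        rw [hydef]
        field_simp
        ring
      rw [Real.dist_eq, hgdef]
      calc |x (↑m₁ : ↥A) - x ↑m₂| = |(y ↑m₁ - y ↑m₂) * cst| := by
            rw [hxy, hxy]; ring_nf
      _ = |y ↑m₁ - y ↑m₂| * cst := by rw [abs_mul, abs_of_pos hcst]
      _ < (1/2:ℝ)^n * cst := by
            exact mul_lt_mul_of_pos_right hylt hcst
      _ < ε := by
            rw [lt_div_iff₀ hcst] at hn
            exact hn
    obtain ⟨l, hltend⟩ := CompleteSpace.complete hC
    refine ⟨A', ?_, l, hltend⟩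
    intro hmem
    apply hpos
    rw [← him]
    exact hmem
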